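/- Two controllable Hamiltonian representations θ(d_1,v_1) and θ(d_2,v_2) (companion-form systems with state matrix g_1(d), input vector e_{2n}, and output row g_2(d,v)) are system isomorphic if and only if g_1(d_1) = g_1(d_2) and g_2(d_1,v_1) = g_2(d_2,v_2); equivalently, the multiset {d_{1,i}} equals {d_{2,i}} and the quadratic invariants c_{2k+1}(d_1,v_1) = c_{2k+1}(d_2,v_2) for all k = 0,…,n−1. -/

import Mathlib

noncomputable section
open Matrix Polynomial

/-- Coefficients of `∏_j (λ² + d_j²)`. -/
def coeffA {n : ℕ} (d : Fin n → ℝ) (i : ℕ) : ℝ :=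
  (∏ j : Fin n, ((X : ℝ[X]) ^ 2 + C (d j ^ 2))).coeff i

/-- The companion-form state matrix `g₁(d)` of `∏_j (λ² + d_j²)`. -/
def g1 {n : ℕ} (d : Fin n → ℝ) : Matrix (Fin (2 * n)) (Fin (2 * n)) ℝ :=
  Matrix.of fun i j =>
    if (i : ℕ) = 2 * n - 1 then -coeffA d j
    else if (j : ℕ) = (i : ℕ) + 1 then 1 else 0

/-- `F_k = diag(f_1,…,f_n)` with `f_l = d_l · Σ_{j_1<⋯<j_k, ≠ l} (d_{j_1}⋯d_{j_k})²`. -/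
def Fmat {n : ℕ} (d : Fin n → ℝ) (k : ℕ) : Matrix (Fin n) (Fin n) ℝ :=
  Matrix.diagonal fun l =>
    d l * ∑ s ∈ (Finset.univ.erase l).powersetCard k, (∏ j ∈ s, d j) ^ 2

/-- The quadratic invariant `c_{2k+1}(d,v) = vᵀ [[F_k,0],[0,F_k]] v`. -/
def cInv {n : ℕ} (d : Fin n → ℝ) (v : Fin n ⊕ Fin n → ℝ) (k : ℕ) : ℝ :=
  v ⬝ᵥ (Matrix.fromBlocks (Fmat d k) 0 0 (Fmat d k) *ᵥ v)

/-- The output row `g₂(d,v) = [0, c_{2n-1}, 0, c_{2n-3}, …, 0, c_1]`. -/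
def g2 {n : ℕ} (d : Fin n → ℝ) (v : Fin n ⊕ Fin n → ℝ) : Fin (2 * n) → ℝ :=
  fun j => if (j : ℕ) % 2 = 1 then cInv d v (n - 1 - (j : ℕ) / 2) else 0

/-- The last standard basis vector `e_{2n}`. -/
def eLast (n : ℕ) : Fin (2 * n) → ℝ := fun i => if (i : ℕ) = 2 * n - 1 then 1 else 0

namespace CtrlHamAux

variable {n : ℕ}

/-- standard basis vector with natural index. -/
def stdv (n j : ℕ) : Fin (2 * n) → ℝ := fun i => if (i : ℕ) = j then 1 else 0

/-- iterated state vectors. -/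
def qv (d : Fin n → ℝ) (k : ℕ) : Fin (2 * n) → ℝ := (g1 d ^ k) *ᵥ eLast n

lemma qv_zero (d : Fin n → ℝ) : qv d 0 = stdv n (2 * n - 1) := by
  funext i; simp [qv, stdv, eLast]

lemma qv_succ (d : Fin n → ℝ) (k : ℕ) : qv d (k + 1) = g1 d *ᵥ qv d k := by
  simp [qv, pow_succ', Matrix.mulVec_mulVec]

lemma g1_mulVec_stdv (d : Fin n → ℝ) (j : Fin (2 * n)) :
    g1 d *ᵥ stdv n (j : ℕ) =
      (fun i : Fin (2 * n) => if (i : ℕ) + 1 = (j : ℕ) then (1:ℝ) else 0) - coeffA d j • stdv n (2 * n - 1) := by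
  funext i
  simp only [mulVec, dotProduct, stdv, g1, of_apply, mul_ite, mul_one, mul_zero,
    Pi.sub_apply, Pi.smul_apply, smul_eq_mul, Fin.val_eq_val]
  rw [Finset.sum_ite_eq' Finset.univ j]
  simp only [Finset.mem_univ, if_true]
  have hj := j.isLt
  have hi' := i.isLt
  by_cases hi : (i : ℕ) = 2 * n - 1
  · have h2 : ¬ (2 * n - 1 + 1 = (j : ℕ)) := by omega
    simp [hi, h2]
  · simp only [hi, if_false, mul_zero, sub_zero]
    by_cases h : (j : ℕ) = (i : ℕ) + 1 <;> simp [h, eq_comm]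

lemma mulVec_sum_smul (A : Matrix (Fin (2 * n)) (Fin (2 * n)) ℝ) (s : Finset ℕ)
    (c : ℕ → ℝ) (v : ℕ → Fin (2 * n) → ℝ) :
    A *ᵥ (∑ m ∈ s, c m • v m) = ∑ m ∈ s, c m • (A *ᵥ v m) := by
  rw [← Matrix.mulVecLin_apply, map_sum]
  simp [Matrix.mulVecLin_apply]

lemma qv_rec (d : Fin n → ℝ) : ∀ k, k ≤ 2 * n - 1 →
    qv d k = stdv n (2 * n - 1 - k)
      - ∑ m ∈ Finset.range k, coeffA d (2 * n - 1 - m) • qv d (k - 1 - m) := by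
  intro k
  induction k with
  | zero => intro _; simp [qv_zero]
  | succ k ih =>
    intro hk
    have hk' : k ≤ 2 * n - 1 := by omega
    have hn : 0 < n := by omega
    rw [qv_succ, ih hk', Matrix.mulVec_sub, mulVec_sum_smul]
    have hj : 2 * n - 1 - k = ((⟨2 * n - 1 - k, by omega⟩ : Fin (2 * n)) : ℕ) := rfl
    rw [hj, g1_mulVec_stdv]
    have e1 : (fun i : Fin (2 * n) =>
        if (i : ℕ) + 1 = ((⟨2 * n - 1 - k, by omega⟩ : Fin (2 * n)) : ℕ) then (1:ℝ) else 0)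
        = stdv n (2 * n - 1 - (k + 1)) := by
      funext i
      simp only [stdv]
      exact if_congr (by omega) rfl rfl
    have e2 : ∀ m ∈ Finset.range k,
        coeffA d (2 * n - 1 - m) • (g1 d *ᵥ qv d (k - 1 - m))
          = coeffA d (2 * n - 1 - m) • qv d (k - m) := by
      intro m hm
      rw [Finset.mem_range] at hm
      rw [show k - m = (k - 1 - m) + 1 from by omega, qv_succ]
    rw [e1, Finset.sum_congr rfl e2, Finset.sum_range_succ]
    have e3 : coeffA d ((⟨2 * n - 1 - k, by omega⟩ : Fin (2 * n)) : ℕ) • stdv n (2 * n - 1)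
        = coeffA d (2 * n - 1 - k) • qv d (k + 1 - 1 - k) := by
      simp only [show k + 1 - 1 - k = 0 from by omega, qv_zero, Fin.val_mk]
    rw [e3]
    have e4 : ∀ m ∈ Finset.range k,
        coeffA d (2 * n - 1 - m) • qv d (k - m)
          = coeffA d (2 * n - 1 - m) • qv d (k + 1 - 1 - m) := by
      intro m hm; rfl
    rw [Finset.sum_congr rfl e4]
    abel

lemma qv_top (hn : 0 < n) (d : Fin n → ℝ) :
    qv d (2 * n) = - ∑ m ∈ Finset.range (2 * n), coeffA d (2 * n - 1 - m) • qv d (2 * n - 1 - m) := by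
  have h2n : 2 * n = (2 * n - 1) + 1 := by omega
  have hstep : qv d (2 * n) = g1 d *ᵥ qv d (2 * n - 1) :=
    (congrArg (qv d) h2n).trans (qv_succ d (2 * n - 1))
  rw [hstep, qv_rec d (2 * n - 1) le_rfl, Matrix.mulVec_sub, mulVec_sum_smul]
  have hj : 2 * n - 1 - (2 * n - 1) = ((⟨0, by omega⟩ : Fin (2 * n)) : ℕ) := by simp
  rw [hj, g1_mulVec_stdv]
  have e1 : (fun i : Fin (2 * n) =>
      if (i : ℕ) + 1 = ((⟨0, by omega⟩ : Fin (2 * n)) : ℕ) then (1:ℝ) else 0) = 0 := by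
    funext i; simp
  have e2 : ∀ m ∈ Finset.range (2 * n - 1),
      coeffA d (2 * n - 1 - m) • (g1 d *ᵥ qv d (2 * n - 1 - 1 - m))
        = coeffA d (2 * n - 1 - m) • qv d (2 * n - 1 - m) := by
    intro m hm
    rw [Finset.mem_range] at hm
    rw [show 2 * n - 1 - m = (2 * n - 1 - 1 - m) + 1 from by omega, qv_succ]
  rw [e1, Finset.sum_congr rfl e2]
  have e3 : coeffA d ((⟨0, by omega⟩ : Fin (2 * n)) : ℕ) • stdv n (2 * n - 1)
      = coeffA d (2 * n - 1 - (2 * n - 1)) • qv d (2 * n - 1 - (2 * n - 1)) := by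
    simp only [show 2 * n - 1 - (2 * n - 1) = 0 from by omega, qv_zero, Fin.val_mk]
  rw [e3]
  rw [show Finset.range (2 * n) = Finset.range ((2 * n - 1) + 1) from by rw [← h2n],
    Finset.sum_range_succ]
  abel

/-- matrix of iterated state vectors (columns `qv d k`). -/
def Qm (d : Fin n → ℝ) : Matrix (Fin (2 * n)) (Fin (2 * n)) ℝ :=
  Matrix.of fun i k => qv d (k : ℕ) i

def Tm (d : Fin n → ℝ) : Matrix (Fin (2 * n)) (Fin (2 * n)) ℝ :=
  Matrix.of fun j k => (if j = k then (1:ℝ) else 0) +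
    (if (j : ℕ) < (k : ℕ) then coeffA d (2 * n - ((k : ℕ) - (j : ℕ))) else 0)

def Pm (n : ℕ) : Matrix (Fin (2 * n)) (Fin (2 * n)) ℝ :=
  Matrix.of fun i k => if (i : ℕ) = 2 * n - 1 - (k : ℕ) then 1 else 0

lemma Pm_mul_Pm (hn : 0 < n) : Pm n * Pm n = 1 := by
  ext i j
  have hj := j.isLt
  have k0 : Fin (2 * n) := ⟨2 * n - 1 - (j : ℕ), by omega⟩
  rw [Matrix.mul_apply]
  have hc : ∀ k : Fin (2 * n), ((k : ℕ) = 2 * n - 1 - (j : ℕ)) =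
      (k = (⟨2 * n - 1 - (j : ℕ), by omega⟩ : Fin (2 * n))) := by
    intro k; rw [Fin.ext_iff]
  simp only [Pm, of_apply, hc, mul_ite, mul_one, mul_zero]
  rw [Finset.sum_ite_eq' Finset.univ (⟨2 * n - 1 - (j : ℕ), by omega⟩ : Fin (2 * n))]
  simp only [Finset.mem_univ, if_true, Matrix.one_apply, Fin.ext_iff]
  exact if_congr (by omega) rfl rfl

lemma Qm_mul_Tm (hn : 0 < n) (d : Fin n → ℝ) : Qm d * Tm d = Pm n := by
  ext i k
  have hk := k.isLt
  rw [Matrix.mul_apply]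
  simp only [Qm, Tm, of_apply, mul_add, mul_ite, mul_one, mul_zero]
  rw [Finset.sum_add_distrib, Finset.sum_ite_eq' Finset.univ k]
  simp only [Finset.mem_univ, if_true]
  have hs1 : ∑ j : Fin (2 * n), (if (j : ℕ) < (k : ℕ)
        then qv d (j : ℕ) i * coeffA d (2 * n - ((k : ℕ) - (j : ℕ))) else 0)
      = ∑ j ∈ Finset.range (2 * n), (if j < (k : ℕ)
        then qv d j i * coeffA d (2 * n - ((k : ℕ) - j)) else 0) :=
    Fin.sum_univ_eq_sum_range
      (fun j => if j < (k : ℕ) then qv d j i * coeffA d (2 * n - ((k : ℕ) - j)) else 0) (2 * n)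
  rw [hs1]
  rw [← Finset.sum_subset (Finset.range_subset_range.mpr (le_of_lt hk))
    (fun x _ hx => by rw [if_neg (by simpa using fun h => hx (Finset.mem_range.mpr h))])]
  have hs2 : ∑ j ∈ Finset.range (k : ℕ), (if j < (k : ℕ)
        then qv d j i * coeffA d (2 * n - ((k : ℕ) - j)) else 0)
      = ∑ j ∈ Finset.range (k : ℕ), qv d j i * coeffA d (2 * n - ((k : ℕ) - j)) :=
    Finset.sum_congr rfl fun j hj => if_pos (Finset.mem_range.mp hj)
  rw [hs2, ← Finset.sum_range_reflect]
  have hs3 : ∀ m ∈ Finset.range (k : ℕ),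
      qv d ((k : ℕ) - 1 - m) i * coeffA d (2 * n - ((k : ℕ) - ((k : ℕ) - 1 - m)))
        = coeffA d (2 * n - 1 - m) • qv d ((k : ℕ) - 1 - m) i := by
    intro m hm
    rw [Finset.mem_range] at hm
    rw [show 2 * n - ((k : ℕ) - ((k : ℕ) - 1 - m)) = 2 * n - 1 - m from by omega,
      smul_eq_mul, mul_comm]
  rw [Finset.sum_congr rfl hs3]
  have hrec := congrFun (qv_rec d (k : ℕ) (by omega)) i
  simp only [Pi.sub_apply, Finset.sum_apply, Pi.smul_apply, smul_eq_mul] at hrec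
  rw [hrec]
  simp only [stdv, Pm, of_apply, smul_eq_mul]
  ring

lemma Qm_left_inv (hn : 0 < n) (d : Fin n → ℝ) :
    ∃ B : Matrix (Fin (2 * n)) (Fin (2 * n)) ℝ, B * Qm d = 1 ∧ Qm d * B = 1 := by
  refine ⟨Tm d * Pm n, ?_, ?_⟩
  · rw [mul_eq_one_comm, ← Matrix.mul_assoc, Qm_mul_Tm hn, Pm_mul_Pm hn]
  · rw [← Matrix.mul_assoc, Qm_mul_Tm hn, Pm_mul_Pm hn]

variable {d₁ d₂ : Fin n → ℝ} {L : Matrix (Fin (2 * n)) (Fin (2 * n)) ℝ}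

lemma pow_intertwine (hcomm : L * g1 d₁ = g1 d₂ * L) (k : ℕ) :
    L * (g1 d₁) ^ k = (g1 d₂) ^ k * L := by
  induction k with
  | zero => simp
  | succ k ih =>
    rw [pow_succ', pow_succ', ← Matrix.mul_assoc, hcomm, Matrix.mul_assoc, ih,
      ← Matrix.mul_assoc]

lemma qv_intertwine (hcomm : L * g1 d₁ = g1 d₂ * L) (he : L *ᵥ eLast n = eLast n) (k : ℕ) :
    L *ᵥ qv d₁ k = qv d₂ k := by
  rw [qv, qv, Matrix.mulVec_mulVec, pow_intertwine hcomm, ← Matrix.mulVec_mulVec, he]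

lemma coeffA_eq_of_intertwine (hn : 0 < n)
    (hcomm : L * g1 d₁ = g1 d₂ * L) (he : L *ᵥ eLast n = eLast n) :
    ∀ m < 2 * n, coeffA d₁ m = coeffA d₂ m := by
  set c : Fin (2 * n) → ℝ := fun j => coeffA d₂ (j : ℕ) - coeffA d₁ (j : ℕ) with hc
  have h1 : L *ᵥ qv d₁ (2 * n) = qv d₂ (2 * n) := qv_intertwine hcomm he (2 * n)
  rw [qv_top hn d₁, qv_top hn d₂, Matrix.mulVec_neg, mulVec_sum_smul] at h1
  have h2 : ∀ m ∈ Finset.range (2 * n),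
      coeffA d₁ (2 * n - 1 - m) • (L *ᵥ qv d₁ (2 * n - 1 - m))
        = coeffA d₁ (2 * n - 1 - m) • qv d₂ (2 * n - 1 - m) := fun m _ => by
    rw [qv_intertwine hcomm he]
  rw [Finset.sum_congr rfl h2] at h1
  have key : ∑ m ∈ Finset.range (2 * n),
      (coeffA d₂ (2 * n - 1 - m) - coeffA d₁ (2 * n - 1 - m)) • qv d₂ (2 * n - 1 - m) = 0 := by
    simp only [sub_smul, Finset.sum_sub_distrib]
    rw [sub_eq_zero]
    exact neg_injective h1.symm
  have hQc : Qm d₂ *ᵥ c = 0 := by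
    funext i
    have e1 : (Qm d₂ *ᵥ c) i
        = ∑ j ∈ Finset.range (2 * n), qv d₂ j i * (coeffA d₂ j - coeffA d₁ j) := by
      rw [Matrix.mulVec, dotProduct]
      exact Fin.sum_univ_eq_sum_range
        (fun j => qv d₂ j i * (coeffA d₂ j - coeffA d₁ j)) (2 * n)
    rw [e1, ← Finset.sum_range_reflect]
    have := congrFun key i
    simp only [Finset.sum_apply, Pi.smul_apply, smul_eq_mul, Pi.zero_apply] at this ⊢
    rw [← this]
    exact Finset.sum_congr rfl fun m _ => mul_comm _ _
  obtain ⟨B, hB, -⟩ := Qm_left_inv hn d₂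
  have hc0 : c = 0 := by
    have : B *ᵥ (Qm d₂ *ᵥ c) = c := by
      rw [Matrix.mulVec_mulVec, hB, Matrix.one_mulVec]
    rw [hQc, Matrix.mulVec_zero] at this
    exact this.symm
  intro m hm
  have := congrFun hc0 ⟨m, hm⟩
  simp only [hc, Pi.zero_apply] at this
  have : coeffA d₂ ((⟨m, hm⟩ : Fin (2 * n)) : ℕ) - coeffA d₁ ((⟨m, hm⟩ : Fin (2 * n)) : ℕ) = 0 := this
  simp only [Fin.val_mk] at this
  linarith

lemma g1_eq_of_coeffA (h : ∀ m < 2 * n, coeffA d₁ m = coeffA d₂ m) : g1 d₁ = g1 d₂ := by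
  ext i j
  simp only [g1, of_apply]
  rw [h j j.isLt]

lemma L_eq_one (hn : 0 < n)
    (hcomm : L * g1 d₁ = g1 d₂ * L) (he : L *ᵥ eLast n = eLast n) :
    g1 d₁ = g1 d₂ ∧ L = 1 := by
  have hg : g1 d₁ = g1 d₂ := g1_eq_of_coeffA (coeffA_eq_of_intertwine hn hcomm he)
  refine ⟨hg, ?_⟩
  have hcomm' : L * g1 d₂ = g1 d₂ * L := by
    conv_lhs => rw [← hg]
    exact hcomm
  have hLQ : L * Qm d₂ = Qm d₂ := by
    ext i k
    have h1 := congrFun (qv_intertwine (d₁ := d₂) hcomm' he (k : ℕ)) i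
    rw [Matrix.mul_apply]
    simpa [Qm, Matrix.mulVec, dotProduct] using h1
  obtain ⟨B, -, hB⟩ := Qm_left_inv hn d₂
  calc L = L * (Qm d₂ * B) := by rw [hB, Matrix.mul_one]
    _ = (L * Qm d₂) * B := by rw [Matrix.mul_assoc]
    _ = Qm d₂ * B := by rw [hLQ]
    _ = 1 := hB

lemma pA_monic (d : Fin n → ℝ) : (∏ j : Fin n, ((X : ℝ[X]) ^ 2 + C (d j ^ 2))).Monic :=
  monic_prod_of_monic _ _ fun _ _ => monic_X_pow_add_C _ two_ne_zero

lemma pA_natDegree (d : Fin n → ℝ) :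
    (∏ j : Fin n, ((X : ℝ[X]) ^ 2 + C (d j ^ 2))).natDegree = 2 * n := by
  rw [natDegree_prod_of_monic _ _ fun _ _ => monic_X_pow_add_C _ two_ne_zero,
    Finset.sum_congr rfl fun (j : Fin n) _ => natDegree_X_pow_add_C]
  simp [mul_comm]

lemma prodA_eq_of_g1_eq (hn : 0 < n) (hg : g1 d₁ = g1 d₂) :
    ∏ j : Fin n, ((X : ℝ[X]) ^ 2 + C (d₁ j ^ 2)) = ∏ j : Fin n, ((X : ℝ[X]) ^ 2 + C (d₂ j ^ 2)) := by
  have hc : ∀ m < 2 * n, coeffA d₁ m = coeffA d₂ m := by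
    intro m hm
    have h := congrFun (congrFun hg (⟨2 * n - 1, by omega⟩ : Fin (2 * n))) ⟨m, hm⟩
    simp only [g1, of_apply, Fin.val_mk, if_true, neg_inj] at h
    exact h
  ext m
  rcases lt_trichotomy m (2 * n) with h | h | h
  · exact hc m h
  · have e₁ : (∏ j : Fin n, ((X : ℝ[X]) ^ 2 + C (d₁ j ^ 2))).coeff (2 * n) = 1 := by
      have := (pA_monic d₁).coeff_natDegree
      rwa [pA_natDegree] at this
    have e₂ : (∏ j : Fin n, ((X : ℝ[X]) ^ 2 + C (d₂ j ^ 2))).coeff (2 * n) = 1 := by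
      have := (pA_monic d₂).coeff_natDegree
      rwa [pA_natDegree] at this
    rw [h, e₁, e₂]
  · rw [coeff_eq_zero_of_natDegree_lt (by rw [pA_natDegree]; exact h),
      coeff_eq_zero_of_natDegree_lt (by rw [pA_natDegree]; exact h)]

lemma exists_perm_of_prodA (hd₁ : ∀ i, 0 < d₁ i) (hd₂ : ∀ i, 0 < d₂ i)
    (hp : ∏ j : Fin n, ((X : ℝ[X]) ^ 2 + C (d₁ j ^ 2))
        = ∏ j : Fin n, ((X : ℝ[X]) ^ 2 + C (d₂ j ^ 2))) :
    ∃ σ : Equiv.Perm (Fin n), ∀ i, d₂ i = d₁ (σ i) := by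
  -- the `q` polynomials are equal
  have hq : ∏ j : Fin n, ((X : ℝ[X]) - C (-(d₁ j ^ 2)))
      = ∏ j : Fin n, ((X : ℝ[X]) - C (-(d₂ j ^ 2))) := by
    have hq' : ∏ j : Fin n, ((X : ℝ[X]) + C (d₁ j ^ 2))
        = ∏ j : Fin n, ((X : ℝ[X]) + C (d₂ j ^ 2)) := by
      apply Polynomial.eq_of_infinite_eval_eq
      apply Set.Infinite.mono (s := Set.Ici (0 : ℝ)) _ (Set.Ici_infinite 0)
      intro x hx
      have hx0 : (0 : ℝ) ≤ x := hx
      have h1 : ∀ d : Fin n → ℝ,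
          eval x (∏ j : Fin n, ((X : ℝ[X]) + C (d j ^ 2)))
            = eval (Real.sqrt x) (∏ j : Fin n, ((X : ℝ[X]) ^ 2 + C (d j ^ 2))) := by
        intro d
        simp [eval_prod, Real.sq_sqrt hx0]
      simp only [Set.mem_setOf_eq, h1, hp]
    have : ∀ d : Fin n → ℝ, ∏ j : Fin n, ((X : ℝ[X]) - C (-(d j ^ 2)))
        = ∏ j : Fin n, ((X : ℝ[X]) + C (d j ^ 2)) := by
      intro d
      exact Finset.prod_congr rfl fun j _ => by rw [map_neg, sub_neg_eq_add]
    rw [this, this, hq']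
  -- multisets of `-d j ^ 2` coincide
  have hroots : (Finset.univ.val.map fun j : Fin n => -(d₁ j ^ 2))
      = (Finset.univ.val.map fun j : Fin n => -(d₂ j ^ 2)) := by
    have r : ∀ d : Fin n → ℝ,
        (∏ j : Fin n, ((X : ℝ[X]) - C (-(d j ^ 2)))).roots
          = Finset.univ.val.map fun j : Fin n => -(d j ^ 2) := by
      intro d
      rw [Finset.prod_eq_multiset_prod, show (Finset.univ.val.map fun j : Fin n =>
          (X : ℝ[X]) - C (-(d j ^ 2)))
        = ((Finset.univ.val.map fun j : Fin n => -(d j ^ 2)).map fun a => (X : ℝ[X]) - C a)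
        from by rw [Multiset.map_map]; rfl]
      exact Polynomial.roots_multiset_prod_X_sub_C _
    rw [← r d₁, ← r d₂, hq]
  -- multisets of `d j` coincide
  have hm : Finset.univ.val.map d₁ = Finset.univ.val.map d₂ := by
    have h := congrArg (Multiset.map fun x : ℝ => Real.sqrt (-x)) hroots
    rw [Multiset.map_map, Multiset.map_map] at h
    have e : ∀ d : Fin n → ℝ, (∀ i, 0 < d i) →
        Finset.univ.val.map ((fun x : ℝ => Real.sqrt (-x)) ∘ fun j : Fin n => -(d j ^ 2))
          = Finset.univ.val.map d := by
      intro d hd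
      exact Multiset.map_congr rfl fun j _ => by
        simp [Real.sqrt_sq (hd j).le]
    rwa [e d₁ hd₁, e d₂ hd₂] at h
  -- from multiset equality to a permutation
  have hperm : (List.ofFn d₁).Perm (List.ofFn d₂) := by
    rw [← Multiset.coe_eq_coe]
    have huv : ∀ d : Fin n → ℝ, ((List.ofFn d : List ℝ) : Multiset ℝ)
        = Finset.univ.val.map d := by
      intro d
      rw [List.ofFn_eq_map]
      rfl
    rw [huv, huv]
    exact hm
  have hsorted : List.ofFn (d₁ ∘ Tuple.sort d₁) = List.ofFn (d₂ ∘ Tuple.sort d₂) :=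
    (fun h s1 s2 => List.Perm.eq_of_sortedLE s1 s2 h)
      (((Tuple.sort d₁).ofFn_comp_perm d₁).trans
        (hperm.trans ((Tuple.sort d₂).ofFn_comp_perm d₂).symm))
      (Tuple.monotone_sort d₁).sortedLE_ofFn (Tuple.monotone_sort d₂).sortedLE_ofFn
  have hfe : d₁ ∘ Tuple.sort d₁ = d₂ ∘ Tuple.sort d₂ := List.ofFn_injective hsorted
  refine ⟨(Tuple.sort d₂).symm.trans (Tuple.sort d₁), fun i => ?_⟩
  have h := congrFun hfe ((Tuple.sort d₂).symm i)
  simp only [Function.comp_apply, Equiv.apply_symm_apply] at h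
  simpa [Equiv.trans_apply] using h.symm

end CtrlHamAux

/-- Two controllable Hamiltonian representations are system isomorphic iff
`g₁(d₁) = g₁(d₂)` and `g₂(d₁,v₁) = g₂(d₂,v₂)`; equivalently, the multisets of
symplectic eigenvalues coincide and all quadratic invariants `c_{2k+1}` agree. -/
theorem ctrlHam_sysIso_iff {n : ℕ} (hn : 0 < n)
    (d₁ d₂ : Fin n → ℝ) (hd₁ : ∀ i, 0 < d₁ i) (hd₂ : ∀ i, 0 < d₂ i)
    (v₁ v₂ : Fin n ⊕ Fin n → ℝ) :
    ((∃ L : Matrix (Fin (2 * n)) (Fin (2 * n)) ℝ,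
        IsUnit L ∧ L * g1 d₁ = g1 d₂ * L ∧ L *ᵥ eLast n = eLast n ∧
          g2 d₁ v₁ = g2 d₂ v₂ ᵥ* L) ↔
      (g1 d₁ = g1 d₂ ∧ g2 d₁ v₁ = g2 d₂ v₂)) ∧
    ((g1 d₁ = g1 d₂ ∧ g2 d₁ v₁ = g2 d₂ v₂) ↔
      (∃ σ : Equiv.Perm (Fin n), (∀ i, d₂ i = d₁ (σ i)) ∧
        ∀ k < n, cInv d₁ v₁ k = cInv d₂ v₂ k)) := by
  constructor
  · constructor
    · rintro ⟨L, -, hcomm, he, hg2⟩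
      obtain ⟨hg, hL⟩ := CtrlHamAux.L_eq_one hn hcomm he
      exact ⟨hg, by rw [hg2, hL, Matrix.vecMul_one]⟩
    · rintro ⟨hg, hg2⟩
      exact ⟨1, isUnit_one, by rw [Matrix.one_mul, Matrix.mul_one, hg],
        Matrix.one_mulVec _, by rw [hg2, Matrix.vecMul_one]⟩
  · constructor
    · rintro ⟨hg, hg2⟩
      obtain ⟨σ, hσ⟩ := CtrlHamAux.exists_perm_of_prodA hd₁ hd₂
        (CtrlHamAux.prodA_eq_of_g1_eq hn hg)
      refine ⟨σ, hσ, fun k hk => ?_⟩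
      have hj : 2 * (n - 1 - k) + 1 < 2 * n := by omega
      have h := congrFun hg2 (⟨2 * (n - 1 - k) + 1, hj⟩ : Fin (2 * n))
      simp only [g2, Fin.val_mk] at h
      rw [show (2 * (n - 1 - k) + 1) % 2 = 1 from by omega,
        show n - 1 - (2 * (n - 1 - k) + 1) / 2 = k from by omega] at h
      simpa using h
    · rintro ⟨σ, hσ, hc⟩
      have hp : ∏ j : Fin n, ((X : ℝ[X]) ^ 2 + C (d₂ j ^ 2))
          = ∏ j : Fin n, ((X : ℝ[X]) ^ 2 + C (d₁ j ^ 2)) := by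
        calc ∏ j : Fin n, ((X : ℝ[X]) ^ 2 + C (d₂ j ^ 2))
            = ∏ j : Fin n, ((X : ℝ[X]) ^ 2 + C (d₁ (σ j) ^ 2)) :=
              Finset.prod_congr rfl fun j _ => by rw [hσ]
          _ = ∏ j : Fin n, ((X : ℝ[X]) ^ 2 + C (d₁ j ^ 2)) := Equiv.prod_comp σ (fun j => (X : ℝ[X]) ^ 2 + C (d₁ j ^ 2))
      have hcoeff : ∀ m, coeffA d₂ m = coeffA d₁ m := fun m => by
        rw [coeffA, coeffA, hp]
      constructor
      · ext i j
        simp only [g1, of_apply, hcoeff]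
      · funext j
        simp only [g2]
        by_cases hj : (j : ℕ) % 2 = 1
        · rw [if_pos hj, if_pos hj, hc (n - 1 - (j : ℕ) / 2) (by omega)]
        · rw [if_neg hj, if_neg hj]
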